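/- Let k₁ > k₂ > 0, let b₁, b₂, ψ₂ ∈ ℝ, set H = (k₁ − k₂)/(k₁ + k₂), and define ξᵢ(y) = kᵢ·y + bᵢ for i = 1, 2. Then for all y ∈ ℝ, Wr₃( 1 + e^{2ξ₂ − ψ₂}, e^{ξ₁ + ξ₂}, e^{ξ₂} )(y) = k₁·k₂·(k₁ + k₂)·e^{ξ₁(y) + 2ξ₂(y)}·( H·e^{2ξ₂(y) − ψ₂} − 1 ). -/

import Mathlib

lemma deriv_exp_affine (c d : ℝ) :
    deriv (fun y => Real.exp (c * y + d)) = fun y => c * Real.exp (c * y + d) := by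
  funext y
  have h : HasDerivAt (fun y => Real.exp (c * y + d)) (Real.exp (c * y + d) * c) y := by
    have h1 : HasDerivAt (fun y : ℝ => c * y + d) c y := by
      simpa using ((hasDerivAt_id y).const_mul c).add_const d
    exact (Real.hasDerivAt_exp _).comp y h1
  rw [h.deriv]; ring

lemma deriv_one_add_exp_affine (c d : ℝ) :
    deriv (fun y => 1 + Real.exp (c * y + d)) = fun y => c * Real.exp (c * y + d) := by
  funext y
  rw [deriv_const_add]
  rw [deriv_exp_affine]

/-- explicit evaluation of the third-order Wronskian `J₂`
appearing in the count of negative eigenvalues of the Hessian. -/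
theorem wronskian_J2 (k₁ k₂ b₁ b₂ ψ₂ H : ℝ)
    (hk₂ : 0 < k₂) (hk : k₂ < k₁)
    (hH : H = (k₁ - k₂) / (k₁ + k₂))
    (ξ₁ ξ₂ : ℝ → ℝ)
    (hξ₁ : ∀ y, ξ₁ y = k₁ * y + b₁) (hξ₂ : ∀ y, ξ₂ y = k₂ * y + b₂)
    (f₁ f₂ f₃ : ℝ → ℝ)
    (hf₁ : ∀ y, f₁ y = 1 + Real.exp (2 * ξ₂ y - ψ₂))
    (hf₂ : ∀ y, f₂ y = Real.exp (ξ₁ y + ξ₂ y))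
    (hf₃ : ∀ y, f₃ y = Real.exp (ξ₂ y)) :
    ∀ y : ℝ,
      Matrix.det !![f₁ y, f₂ y, f₃ y;
                    deriv f₁ y, deriv f₂ y, deriv f₃ y;
                    deriv (deriv f₁) y, deriv (deriv f₂) y, deriv (deriv f₃) y]
        = k₁ * k₂ * (k₁ + k₂) * Real.exp (ξ₁ y + 2 * ξ₂ y)
            * (H * Real.exp (2 * ξ₂ y - ψ₂) - 1) := by
  intro y
  have hF₁ : f₁ = fun y => 1 + Real.exp ((2*k₂) * y + (2*b₂ - ψ₂)) := by
    funext z; rw [hf₁, hξ₂]; ring_nf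
  have hF₂ : f₂ = fun y => Real.exp ((k₁+k₂) * y + (b₁+b₂)) := by
    funext z; rw [hf₂, hξ₁, hξ₂]; ring_nf
  have hF₃ : f₃ = fun y => Real.exp (k₂ * y + b₂) := by
    funext z; rw [hf₃, hξ₂]
  rw [hF₁, hF₂, hF₃, deriv_one_add_exp_affine, deriv_exp_affine, deriv_exp_affine]
  have hd₁ : deriv (fun y => (2*k₂) * Real.exp ((2*k₂) * y + (2*b₂ - ψ₂)))
      = fun y => (2*k₂) * ((2*k₂) * Real.exp ((2*k₂) * y + (2*b₂ - ψ₂))) := by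
    funext z; rw [deriv_const_mul _ (by exact (Real.differentiable_exp.comp (by fun_prop)).differentiableAt)]
    rw [deriv_exp_affine]
  have hd₂ : deriv (fun y => (k₁+k₂) * Real.exp ((k₁+k₂) * y + (b₁+b₂)))
      = fun y => (k₁+k₂) * ((k₁+k₂) * Real.exp ((k₁+k₂) * y + (b₁+b₂))) := by
    funext z; rw [deriv_const_mul _ (by exact (Real.differentiable_exp.comp (by fun_prop)).differentiableAt)]
    rw [deriv_exp_affine]
  have hd₃ : deriv (fun y => k₂ * Real.exp (k₂ * y + b₂))
      = fun y => k₂ * (k₂ * Real.exp (k₂ * y + b₂)) := by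
    funext z; rw [deriv_const_mul _ (by exact (Real.differentiable_exp.comp (by fun_prop)).differentiableAt)]
    rw [deriv_exp_affine]
  rw [hd₁, hd₂, hd₃]
  have hk12 : k₁ + k₂ ≠ 0 := by nlinarith
  have hξ1y : ξ₁ y = k₁ * y + b₁ := hξ₁ y
  have hξ2y : ξ₂ y = k₂ * y + b₂ := hξ₂ y
  rw [hξ1y, hξ2y, hH]
  simp only [Matrix.det_fin_three, Matrix.cons_val', Matrix.cons_val_zero, Matrix.cons_val_one,
    Matrix.head_cons, Matrix.empty_val', Matrix.cons_val_fin_one, Matrix.head_fin_const,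
    Matrix.cons_val_two, Matrix.tail_cons, Matrix.of_apply]
  field_simp
  rw [show (2*k₂)*y + (2*b₂ - ψ₂) = (k₂*y+b₂) + ((k₂*y+b₂) - ψ₂) by ring,
      show y*(k₁+k₂) + (b₁+b₂) = (k₁*y+b₁) + (k₂*y+b₂) by ring,
      show y*k₁+b₁ + 2*(k₂*y+b₂) = ((k₁*y+b₁)+(k₂*y+b₂)) + (k₂*y+b₂) by ring,
      show 2*(k₂*y+b₂) - ψ₂ = (k₂*y+b₂) + ((k₂*y+b₂) - ψ₂) by ring]
  simp only [Real.exp_add, Real.exp_sub]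
  have := Real.exp_ne_zero ψ₂
  field_simp
  ring
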